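/- Let z = x − y ∈ ℝ² ∖ {0} and α_{ij}(x,y) the entries of 2zzᵀ/|z|² − I. Then away from the diagonal x = y, the double curl vanishes: ∂²α₁₁/∂x²∂y² − ∂²α₁₂/∂x²∂y¹ − ∂²α₂₁/∂x¹∂y² + ∂²α₂₂/∂x¹∂y¹ = 0, i.e., d₁d₂α = 0 on {x ≠ y}. -/

import Mathlib

set_option maxHeartbeats 1000000

-- inner derivative for diagonal terms
lemma inner_diag (p b u0 : ℝ) (h : p^2+(b-u0)^2 ≠ 0) :
    HasDerivAt (fun u => (p^2-(b-u)^2)/(p^2+(b-u)^2))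
      (4*p^2*(b-u0)/(p^2+(b-u0)^2)^2) u0 := by
  have h0 : HasDerivAt (fun u : ℝ => b - u) (-1) u0 := by
    simpa using (hasDerivAt_id u0).const_sub b
  have hsq : HasDerivAt (fun u : ℝ => (b-u)^2) (-(2*(b-u0))) u0 := by
    have := h0.fun_pow 2
    convert! this using 1
    all_goals ring
  have hnum : HasDerivAt (fun u : ℝ => p^2-(b-u)^2) (2*(b-u0)) u0 := by
    simpa using hsq.const_sub (p^2)
  have hden : HasDerivAt (fun u : ℝ => p^2+(b-u)^2) (-(2*(b-u0))) u0 := by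
    simpa using hsq.const_add (p^2)
  have := hnum.fun_div hden h
  convert! this using 1
  field_simp
  ring

lemma outer_diag (p b s0 : ℝ) (h : p^2+(s0-b)^2 ≠ 0) :
    HasDerivAt (fun s => 4*p^2*(s-b)/(p^2+(s-b)^2)^2)
      (4*p^2*(p^2-3*(s0-b)^2)/(p^2+(s0-b)^2)^3) s0 := by
  have h0 : HasDerivAt (fun s : ℝ => s - b) 1 s0 := (hasDerivAt_id s0).sub_const b
  have hnum : HasDerivAt (fun s : ℝ => 4*p^2*(s-b)) (4*p^2) s0 := by
    simpa using h0.const_mul (4*p^2)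
  have hsq : HasDerivAt (fun s : ℝ => p^2+(s-b)^2) (2*(s0-b)) s0 := by
    have := h0.pow 2
    simpa using (this.const_add (p^2))
  have hden : HasDerivAt (fun s : ℝ => (p^2+(s-b)^2)^2) (2*(p^2+(s0-b)^2)*(2*(s0-b))) s0 := by
    have := hsq.fun_pow 2
    convert! this using 1
    all_goals ring
  have hd2 : (p^2+(s0-b)^2)^2 ≠ 0 := pow_ne_zero 2 h
  have := hnum.fun_div hden hd2
  convert! this using 1
  field_simp
  ring

lemma inner_cross (x1 c y1 : ℝ) (h : (x1-y1)^2+c^2 ≠ 0) :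
    HasDerivAt (fun u => 2*(x1-u)*c/((x1-u)^2+c^2))
      (2*c*((x1-y1)^2-c^2)/((x1-y1)^2+c^2)^2) y1 := by
  have h0 : HasDerivAt (fun u : ℝ => x1 - u) (-1) y1 := by
    simpa using (hasDerivAt_id y1).const_sub x1
  have hnum : HasDerivAt (fun u : ℝ => 2*(x1-u)*c) (-(2*c)) y1 := by
    have := (h0.const_mul 2).mul_const c
    convert! this using 1
    all_goals ring
  have hden : HasDerivAt (fun u : ℝ => (x1-u)^2+c^2) (-(2*(x1-y1))) y1 := by
    have := (h0.fun_pow 2).add_const (c^2)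
    convert! this using 1
    all_goals ring
  have := hnum.fun_div hden h
  convert! this using 1
  field_simp
  ring

lemma outer_cross (p y2 s0 : ℝ) (h : p^2+(s0-y2)^2 ≠ 0) :
    HasDerivAt (fun s => 2*(s-y2)*(p^2-(s-y2)^2)/(p^2+(s-y2)^2)^2)
      ((2*p^4 - 12*p^2*(s0-y2)^2 + 2*(s0-y2)^4)/(p^2+(s0-y2)^2)^3) s0 := by
  have h0 : HasDerivAt (fun s : ℝ => s - y2) 1 s0 := (hasDerivAt_id s0).sub_const y2
  have hsq : HasDerivAt (fun s : ℝ => (s-y2)^2) (2*(s0-y2)) s0 := by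
    have := h0.fun_pow 2
    convert! this using 1
    all_goals ring
  have hnum : HasDerivAt (fun s : ℝ => 2*(s-y2)*(p^2-(s-y2)^2))
      (2*(p^2-(s0-y2)^2) + 2*(s0-y2)*(-(2*(s0-y2)))) s0 := by
    have hf : HasDerivAt (fun s : ℝ => 2*(s-y2)) 2 s0 := by
      simpa using h0.const_mul 2
    have hg : HasDerivAt (fun s : ℝ => p^2-(s-y2)^2) (-(2*(s0-y2))) s0 := by
      simpa using hsq.const_sub (p^2)
    have := hf.fun_mul hg
    convert this using 1
    all_goals ring
  have hden : HasDerivAt (fun s : ℝ => (p^2+(s-y2)^2)^2)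
      (2*(p^2+(s0-y2)^2)*(2*(s0-y2))) s0 := by
    have := ((hsq.const_add (p^2)).fun_pow 2)
    convert! this using 1
    all_goals ring
  have hd2 : (p^2+(s0-y2)^2)^2 ≠ 0 := pow_ne_zero 2 h
  have := hnum.fun_div hden hd2
  convert! this using 1
  field_simp
  ring

-- full diagonal term
lemma diag_term (p y2 x2 : ℝ) (h : p^2+(x2-y2)^2 ≠ 0) :
    deriv (fun s => deriv (fun u => (p^2-(s-u)^2)/(p^2+(s-u)^2)) y2) x2
      = 4*p^2*(p^2-3*(x2-y2)^2)/(p^2+(x2-y2)^2)^3 := by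
  have hopen : IsOpen {s : ℝ | p^2+(s-y2)^2 ≠ 0} :=
    IsOpen.preimage (by continuity) (isOpen_compl_singleton (x := (0:ℝ)))
  have hmem : {s : ℝ | p^2+(s-y2)^2 ≠ 0} ∈ nhds x2 := hopen.mem_nhds h
  have hev : (fun s => deriv (fun u => (p^2-(s-u)^2)/(p^2+(s-u)^2)) y2)
      =ᶠ[nhds x2] (fun s => 4*p^2*(s-y2)/(p^2+(s-y2)^2)^2) := by
    filter_upwards [hmem] with s hs
    exact (inner_diag p s y2 hs).deriv
  rw [hev.deriv_eq]
  exact (outer_diag p y2 x2 h).deriv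

-- full cross term
lemma cross_term (x1 y1 y2 x2 : ℝ) (h : (x1-y1)^2+(x2-y2)^2 ≠ 0) :
    deriv (fun s => deriv (fun u => 2*(x1-u)*(s-y2)/((x1-u)^2+(s-y2)^2)) y1) x2
      = (2*(x1-y1)^4 - 12*(x1-y1)^2*(x2-y2)^2 + 2*(x2-y2)^4)/((x1-y1)^2+(x2-y2)^2)^3 := by
  set p := x1 - y1 with hp
  have hopen : IsOpen {s : ℝ | p^2+(s-y2)^2 ≠ 0} :=
    IsOpen.preimage (by continuity) (isOpen_compl_singleton (x := (0:ℝ)))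
  have hmem : {s : ℝ | p^2+(s-y2)^2 ≠ 0} ∈ nhds x2 := hopen.mem_nhds h
  have hev : (fun s => deriv (fun u => 2*(x1-u)*(s-y2)/((x1-u)^2+(s-y2)^2)) y1)
      =ᶠ[nhds x2] (fun s => 2*(s-y2)*(p^2-(s-y2)^2)/(p^2+(s-y2)^2)^2) := by
    filter_upwards [hmem] with s hs
    have := (inner_cross x1 (s-y2) y1 hs).deriv
    rw [this]
    all_goals ring
  rw [hev.deriv_eq]
  rw [(outer_cross p y2 x2 h).deriv]

lemma key (P Q : ℝ) (h : P^2+Q^2 ≠ 0) :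
    4*P^2*(P^2-3*Q^2)/(P^2+Q^2)^3 - (2*P^4 - 12*P^2*Q^2 + 2*Q^4)/(P^2+Q^2)^3
      - (2*Q^4 - 12*Q^2*P^2 + 2*P^4)/(Q^2+P^2)^3 + 4*Q^2*(Q^2-3*P^2)/(Q^2+P^2)^3 = 0 := by
  have e : Q^2+P^2 = P^2+Q^2 := by ring
  rw [e, div_sub_div_same, div_sub_div_same, ← add_div, div_eq_zero_iff]
  left
  ring

theorem stmt16 (x y : ℝ × ℝ) (hxy : x ≠ y) :
    let α : Fin 2 → Fin 2 → ℝ × ℝ → ℝ × ℝ → ℝ := fun i j a b =>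
      (if i = j then
          (if i = 0 then (a.1 - b.1) ^ 2 - (a.2 - b.2) ^ 2
            else (a.2 - b.2) ^ 2 - (a.1 - b.1) ^ 2)
        else 2 * (a.1 - b.1) * (a.2 - b.2))
        / ((a.1 - b.1) ^ 2 + (a.2 - b.2) ^ 2)
    deriv (fun s => deriv (fun u => α 0 0 (x.1, s) (y.1, u)) y.2) x.2
      - deriv (fun s => deriv (fun u => α 0 1 (x.1, s) (u, y.2)) y.1) x.2
      - deriv (fun s => deriv (fun u => α 1 0 (s, x.2) (y.1, u)) y.2) x.1
      + deriv (fun s => deriv (fun u => α 1 1 (s, x.2) (u, y.2)) y.1) x.1 = 0 := by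
  intro α
  set p := x.1 - y.1 with hp
  set q := x.2 - y.2 with hq
  have h : p^2 + q^2 ≠ 0 := by
    intro h0
    apply hxy
    have h1 : p = 0 := by nlinarith [sq_nonneg p, sq_nonneg q]
    have h2 : q = 0 := by nlinarith [sq_nonneg p, sq_nonneg q]
    exact Prod.ext (by rw [hp] at h1; linarith) (by rw [hq] at h2; linarith)
  have hA : deriv (fun s => deriv (fun u => α 0 0 (x.1, s) (y.1, u)) y.2) x.2
      = 4*p^2*(p^2-3*q^2)/(p^2+q^2)^3 := by
    have : (fun s => deriv (fun u => α 0 0 (x.1, s) (y.1, u)) y.2)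
        = (fun s => deriv (fun u => (p^2-(s-u)^2)/(p^2+(s-u)^2)) y.2) := by
      funext s
      congr 1
      all_goals funext u
      all_goals simp only [α, hp]
      all_goals try norm_num
      all_goals try ring
    rw [this, diag_term p y.2 x.2 h]
  have hD : deriv (fun s => deriv (fun u => α 1 1 (s, x.2) (u, y.2)) y.1) x.1
      = 4*q^2*(q^2-3*p^2)/(q^2+p^2)^3 := by
    have : (fun s => deriv (fun u => α 1 1 (s, x.2) (u, y.2)) y.1)
        = (fun s => deriv (fun u => (q^2-(s-u)^2)/(q^2+(s-u)^2)) y.1) := by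
      funext s
      congr 1
      all_goals funext u
      all_goals simp only [α, hq]
      all_goals try norm_num
      all_goals try ring
    rw [this, diag_term q y.1 x.1 (show q^2+p^2 ≠ 0 by intro h0; exact h (by linarith))]
  have hB : deriv (fun s => deriv (fun u => α 0 1 (x.1, s) (u, y.2)) y.1) x.2
      = (2*p^4 - 12*p^2*q^2 + 2*q^4)/(p^2+q^2)^3 := by
    have : (fun s => deriv (fun u => α 0 1 (x.1, s) (u, y.2)) y.1)
        = (fun s => deriv (fun u => 2*(x.1-u)*(s-y.2)/((x.1-u)^2+(s-y.2)^2)) y.1) := by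
      funext s
      congr 1
      all_goals funext u
      all_goals simp only [α]
      all_goals try norm_num
      all_goals try ring
    rw [this, cross_term x.1 y.1 y.2 x.2 h]
  have hC : deriv (fun s => deriv (fun u => α 1 0 (s, x.2) (y.1, u)) y.2) x.1
      = (2*q^4 - 12*q^2*p^2 + 2*p^4)/(q^2+p^2)^3 := by
    have : (fun s => deriv (fun u => α 1 0 (s, x.2) (y.1, u)) y.2)
        = (fun s => deriv (fun u => 2*(x.2-u)*(s-y.1)/((x.2-u)^2+(s-y.1)^2)) y.2) := by
      funext s
      congr 1
      all_goals funext u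
      all_goals simp only [α]
      all_goals try norm_num
      all_goals try ring
    rw [this, cross_term x.2 y.2 y.1 x.1 (show q^2+p^2 ≠ 0 by intro h0; exact h (by linarith))]
  rw [hA, hB, hC, hD]
  exact key p q h
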